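/- Let b₁ ∈ ℝ, b₄ > 0 and b₅ ∈ ℝ. Define k : ℝ → ℝ by k(s) = b₄/(b₄²·(s − b₅)² + 1 + b₁²). Then k is positive, non-constant, and satisfies (3/4)·k'(s)² − (1/2)·k(s)·k''(s) − (1 + b₁²)·k(s)⁴ = 0 for every s ∈ ℝ. -/

import Mathlib

/-- In flat `ℝ³` (K = 0): `k(s) = b₄/(b₄²(s−b₅)² + 1 + b₁²)` with `b₄ > 0` is positive,
non-constant and satisfies `(3/4)k'² − (1/2)k k'' − (1+b₁²)k⁴ = 0`. -/
theorem stmt_12 (b₁ b₄ b₅ : ℝ) (hb₄ : 0 < b₄)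
    (k : ℝ → ℝ)
    (hk : k = fun s => b₄ / (b₄ ^ 2 * (s - b₅) ^ 2 + 1 + b₁ ^ 2)) :
    (∀ s, 0 < k s) ∧ (∃ s t : ℝ, k s ≠ k t) ∧
      ∀ s, 3 / 4 * (deriv k s) ^ 2 - 1 / 2 * k s * deriv (deriv k) s
        - (1 + b₁ ^ 2) * (k s) ^ 4 = 0 := by
  have hq : ∀ s : ℝ, 0 < b₄ ^ 2 * (s - b₅) ^ 2 + 1 + b₁ ^ 2 := by
    intro s; positivity
  have hqne : ∀ s : ℝ, b₄ ^ 2 * (s - b₅) ^ 2 + 1 + b₁ ^ 2 ≠ 0 :=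
    fun s => ne_of_gt (hq s)
  have hqd : ∀ s : ℝ, HasDerivAt (fun s => b₄ ^ 2 * (s - b₅) ^ 2 + 1 + b₁ ^ 2)
      (2 * b₄ ^ 2 * (s - b₅)) s := by
    intro s
    have h1 : HasDerivAt (fun s : ℝ => s - b₅) 1 s := (hasDerivAt_id s).sub_const b₅
    have h2 := ((((h1.pow 2).const_mul (b₄ ^ 2)).add_const (1 : ℝ)).add_const (b₁ ^ 2))
    convert h2 using 1
    · rfl
    · rfl
    · rfl
    · push_cast
      ring
  have hkd : ∀ s : ℝ, HasDerivAt k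
      (-2 * b₄ ^ 3 * (s - b₅) / (b₄ ^ 2 * (s - b₅) ^ 2 + 1 + b₁ ^ 2) ^ 2) s := by
    intro s
    have := (hasDerivAt_const s b₄).div (hqd s) (hqne s)
    rw [hk]
    convert this using 1
    · rfl
    · rfl
    · rfl
    · ring
  have hdk : deriv k = fun s =>
      -2 * b₄ ^ 3 * (s - b₅) / (b₄ ^ 2 * (s - b₅) ^ 2 + 1 + b₁ ^ 2) ^ 2 := by
    funext s; exact (hkd s).deriv
  have hkdd : ∀ s : ℝ, HasDerivAt (deriv k)
      ((-2 * b₄ ^ 3 * (b₄ ^ 2 * (s - b₅) ^ 2 + 1 + b₁ ^ 2) ^ 2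
        - (-2 * b₄ ^ 3 * (s - b₅)) * (2 * (b₄ ^ 2 * (s - b₅) ^ 2 + 1 + b₁ ^ 2) ^ 1
            * (2 * b₄ ^ 2 * (s - b₅))))
        / ((b₄ ^ 2 * (s - b₅) ^ 2 + 1 + b₁ ^ 2) ^ 2) ^ 2) s := by
    intro s
    have hn : HasDerivAt (fun s : ℝ => -2 * b₄ ^ 3 * (s - b₅)) (-2 * b₄ ^ 3) s := by
      have := ((hasDerivAt_id s).sub_const b₅).const_mul (-2 * b₄ ^ 3)
      simpa using this
    have hden := (hqd s).pow 2
    have hdenne : (b₄ ^ 2 * (s - b₅) ^ 2 + 1 + b₁ ^ 2) ^ 2 ≠ 0 := pow_ne_zero _ (hqne s)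
    have := hn.div hden hdenne
    rw [hdk]
    convert this using 1
    · rfl
    · rfl
    · rfl
    · norm_num
  refine ⟨?_, ⟨b₅, b₅ + 1, ?_⟩, ?_⟩
  · intro s
    rw [hk]
    exact div_pos hb₄ (hq s)
  · rw [hk]
    simp only
    intro h
    have h2 : (0:ℝ) < b₄ ^ 2 * (b₅ + 1 - b₅) ^ 2 + 1 + b₁ ^ 2 := hq _
    have h3 : (0:ℝ) < b₄ ^ 2 * (b₅ - b₅) ^ 2 + 1 + b₁ ^ 2 := hq _
    rw [div_eq_div_iff (ne_of_gt h3) (ne_of_gt h2)] at h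
    ring_nf at h
    nlinarith [h, pow_pos hb₄ 3]
  · intro s
    have h2 := (hkdd s).deriv
    rw [hdk] at *
    rw [h2, hk]
    simp only
    field_simp
    ring
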